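/- Strong duality for the asymmetric shortest transshipment LP: let b ∈ ℝⁿ lie in the column space of A. Then the minimum min{ p(W★x) : x ∈ ℝᵐ, Ax = b } and the maximum max{ bᵀy : y ∈ ℝⁿ, q(R★Aᵀy) ≤ 1 } are both attained and are equal. -/

import Mathlib

open Matrix BigOperators

/-- Asymmetric "norm" `p(v) = Σᵢ max(0, vᵢ)`. -/
noncomputable def pnorm {d : Type*} [Fintype d] (v : d → ℝ) : ℝ := ∑ i, max (v i) 0

/-- Asymmetric "norm" `q(v) = max(0, maxᵢ vᵢ)`. -/
noncomputable def qnorm {d : Type*} [Fintype d] (v : d → ℝ) : ℝ :=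
  Finset.univ.fold max 0 v

/-- ∞-norm `‖v‖_∞ = maxᵢ |vᵢ|` (as `max(0, maxᵢ |vᵢ|)`, which agrees with it). -/
noncomputable def infnorm {d : Type*} [Fintype d] (v : d → ℝ) : ℝ :=
  Finset.univ.fold max 0 (fun i => |v i|)

/-- 1-norm `‖v‖₁ = Σᵢ |vᵢ|`. -/
noncomputable def onenorm {d : Type*} [Fintype d] (v : d → ℝ) : ℝ := ∑ i, |v i|

/-- `W★ : ℝᵐ → ℝ²ᵐ`, sending `x` to `(W₊x, −W₋x)`. -/
noncomputable def Wstar {m : ℕ} (wp wm : Fin m → ℝ) (x : Fin m → ℝ) : Fin m ⊕ Fin m → ℝ :=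
  Sum.elim (fun e => wp e * x e) (fun e => -(wm e * x e))

/-- `R★ : ℝᵐ → ℝ²ᵐ`, sending `x` to `(W₊⁻¹x, −W₋⁻¹x)`. -/
noncomputable def Rstar {m : ℕ} (wp wm : Fin m → ℝ) (x : Fin m → ℝ) : Fin m ⊕ Fin m → ℝ :=
  Sum.elim (fun e => x e / wp e) (fun e => -(x e / wm e))

/-- The transpose `R★ᵀ : ℝ²ᵐ → ℝᵐ`. -/
noncomputable def RstarT {m : ℕ} (wp wm : Fin m → ℝ) (g : Fin m ⊕ Fin m → ℝ) : Fin m → ℝ :=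
  fun e => g (Sum.inl e) / wp e - g (Sum.inr e) / wm e

/-- Soft-max `lse_β(v) = (1/β)·ln(Σᵢ e^{β·vᵢ})`. -/
noncomputable def lse {d : Type*} [Fintype d] (β : ℝ) (v : d → ℝ) : ℝ :=
  (1 / β) * Real.log (∑ i, Real.exp (β * v i))

/-- Gradient of the soft-max: `∇lse_β(v)ᵢ = e^{β·vᵢ}/Σⱼ e^{β·vⱼ}`. -/
noncomputable def gradLse {d : Type*} [Fintype d] (β : ℝ) (v : d → ℝ) : d → ℝ :=
  fun i => Real.exp (β * v i) / ∑ j, Real.exp (β * v j)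

/-- Potential `φ_β(π) = lse_β(R★Aᵀπ)`. -/
noncomputable def pot {n m : ℕ} (A : Matrix (Fin n) (Fin m) ℝ) (wp wm : Fin m → ℝ)
    (β : ℝ) (π : Fin n → ℝ) : ℝ :=
  lse β (Rstar wp wm (Aᵀ *ᵥ π))

/-- Gradient of the potential: `∇φ_β(π) = A·R★ᵀ·∇lse_β(R★Aᵀπ)`. -/
noncomputable def gradPot {n m : ℕ} (A : Matrix (Fin n) (Fin m) ℝ) (wp wm : Fin m → ℝ)
    (β : ℝ) (π : Fin n → ℝ) : Fin n → ℝ :=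
  A *ᵥ RstarT wp wm (gradLse β (Rstar wp wm (Aᵀ *ᵥ π)))

lemma range_AtA_eq' {n m : ℕ} (A : Matrix (Fin n) (Fin m) ℝ) :
    LinearMap.range (Aᵀ * A).mulVecLin = LinearMap.range Aᵀ.mulVecLin := by
  apply Submodule.eq_of_le_of_finrank_le
  · rw [Matrix.mulVecLin_mul]; exact LinearMap.range_comp_le_range _ _
  · have h1 : (Aᵀ * A).rank = A.rank := Matrix.rank_transpose_mul_self A
    have h2 : Aᵀ.rank = A.rank := Matrix.rank_transpose A
    simpa [Matrix.rank] using (h2.trans h1.symm).le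

lemma max_add_le' (a b : ℝ) : max (a + b) 0 ≤ max a 0 + max b 0 :=
  max_le (add_le_add (le_max_left _ _) (le_max_left _ _)) (by positivity)

lemma max_abs_eq' (a : ℝ) : max a 0 + max (-a) 0 = |a| := by
  rcases le_total 0 a with h | h
  · rw [max_eq_left h, max_eq_right (neg_nonpos.mpr h), abs_of_nonneg h, add_zero]
  · rw [max_eq_right h, max_eq_left (neg_nonneg.mpr h), abs_of_nonpos h, zero_add]

lemma smul_max' (a : ℝ) (ha : 0 ≤ a) (x : ℝ) : max (a * x) 0 = a * max x 0 := by
  rw [mul_max_of_nonneg _ _ ha, mul_zero]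


set_option maxHeartbeats 2000000 in
/-- Strong duality for the asymmetric shortest transshipment LP:
`min{ p(W★x) : Ax = b } = max{ bᵀy : q(R★Aᵀy) ≤ 1 }`, both attained. -/
theorem asymmetric_transshipment_strong_duality {n m : ℕ} (hn : 1 ≤ n) (hm : 1 ≤ m)
    (A : Matrix (Fin n) (Fin m) ℝ) (wp wm : Fin m → ℝ)
    (hw : ∀ e, 0 < wm e ∧ wm e ≤ wp e)
    (b : Fin n → ℝ) (hb : ∃ x : Fin m → ℝ, A *ᵥ x = b) :
    ∃ v : ℝ,
      IsLeast {c : ℝ | ∃ x : Fin m → ℝ, A *ᵥ x = b ∧ pnorm (Wstar wp wm x) = c} v ∧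
      IsGreatest {c : ℝ | ∃ y : Fin n → ℝ,
        qnorm (Rstar wp wm (Aᵀ *ᵥ y)) ≤ 1 ∧ b ⬝ᵥ y = c} v := by
  obtain ⟨x0, hx0⟩ := hb
  have hwm : ∀ e, 0 < wm e := fun e => (hw e).1
  have hwp : ∀ e, 0 < wp e := fun e => lt_of_lt_of_le (hwm e) (hw e).2
  haveI : Nonempty (Fin m) := ⟨⟨0, hm⟩⟩
  set f : (Fin m → ℝ) → ℝ := fun x => ∑ e, (wp e * max (x e) 0 + wm e * max (-(x e)) 0) with hfdef
  have hpnorm : ∀ x, pnorm (Wstar wp wm x) = f x := by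
    intro x
    rw [pnorm, Fintype.sum_sum_type, hfdef]
    rw [← Finset.sum_add_distrib]
    apply Finset.sum_congr rfl
    intro e _
    rw [Wstar]; simp only [Sum.elim_inl, Sum.elim_inr]
    rw [smul_max' _ (hwp e).le, show -(wm e * x e) = wm e * (-(x e)) by ring,
      smul_max' _ (hwm e).le]
  have hqnorm : ∀ y : Fin n → ℝ, qnorm (Rstar wp wm (Aᵀ *ᵥ y)) ≤ 1 ↔
      ∀ e, -(wm e) ≤ (Aᵀ *ᵥ y) e ∧ (Aᵀ *ᵥ y) e ≤ wp e := by
    intro y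
    rw [qnorm, Finset.fold_max_le]
    simp only [Finset.mem_univ, true_implies, Sum.forall, Rstar, Sum.elim_inl, Sum.elim_inr]
    constructor
    · rintro ⟨-, h1, h2⟩ e
      refine ⟨?_, ?_⟩
      · have h3 := h2 e
        rw [← neg_div, div_le_one (hwm e)] at h3; linarith
      · have h3 := h1 e
        rw [div_le_one (hwp e)] at h3; linarith
    · rintro h
      refine ⟨zero_le_one, fun e => ?_, fun e => ?_⟩
      · have := (h e).2; rw [div_le_one (hwp e)]; exact this
      · have := (h e).1; have h2 : -1 ≤ (Aᵀ *ᵥ y) e / wm e := by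
          rw [le_div_iff₀ (hwm e)]; nlinarith [hwm e]
        linarith
  have hdot : ∀ (x : Fin m → ℝ) (w : Fin n → ℝ), (A *ᵥ x) ⬝ᵥ w = x ⬝ᵥ (Aᵀ *ᵥ w) := by
    intro x w; rw [Matrix.dotProduct_mulVec, Matrix.vecMul_transpose]
  have hf_cont : Continuous f := by
    rw [hfdef]
    apply continuous_finset_sum
    intro e _
    exact ((continuous_const.mul ((continuous_apply e).max continuous_const)).add
      (continuous_const.mul (((continuous_apply e).neg).max continuous_const)))
  have hf_nonneg : ∀ x, 0 ≤ f x := by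
    intro x; apply Finset.sum_nonneg; intro e _
    have := le_max_right (x e) 0; have := le_max_right (-(x e)) 0
    nlinarith [hwp e, hwm e]
  have hf_add : ∀ x y, f (x + y) ≤ f x + f y := by
    intro x y
    rw [hfdef]
    simp only
    rw [← Finset.sum_add_distrib]
    apply Finset.sum_le_sum
    intro e _
    have h1 : max ((x + y) e) 0 ≤ max (x e) 0 + max (y e) 0 := max_add_le' _ _
    have h2 : max (-((x + y) e)) 0 ≤ max (-(x e)) 0 + max (-(y e)) 0 := by
      have h := max_add_le' (-(x e)) (-(y e))
      have h2 : -((x + y) e) = -(x e) + -(y e) := by simp only [Pi.add_apply]; ring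
      rw [h2]; exact h
    nlinarith [hwp e, hwm e]
  have hf_smul : ∀ (a : ℝ), 0 ≤ a → ∀ x, f (a • x) = a * f x := by
    intro a ha x
    rw [hfdef]
    simp only [Pi.smul_apply, smul_eq_mul, Finset.mul_sum]
    apply Finset.sum_congr rfl
    intro e _
    rw [smul_max' a ha, show -(a * x e) = a * (-(x e)) by ring, smul_max' a ha]
    ring
  set μ : ℝ := Finset.univ.inf' Finset.univ_nonempty wm with hμdef
  have hμpos : 0 < μ := by
    rw [hμdef, Finset.lt_inf'_iff]; exact fun e _ => hwm e
  have hμle : ∀ e, μ ≤ wm e := fun e => Finset.inf'_le _ (Finset.mem_univ e)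
  have hf_lb : ∀ x, μ * ‖x‖ ≤ f x := by
    intro x
    have h1 : ∑ e, μ * |x e| ≤ f x := by
      apply Finset.sum_le_sum
      intro e _
      have h2 : μ * |x e| ≤ wm e * |x e| := mul_le_mul_of_nonneg_right (hμle e) (abs_nonneg _)
      have h3 : wm e * |x e| = wm e * max (x e) 0 + wm e * max (-(x e)) 0 := by
        rw [← max_abs_eq' (x e)]; ring
      have h4 : wm e * max (x e) 0 ≤ wp e * max (x e) 0 :=
        mul_le_mul_of_nonneg_right (hw e).2 (le_max_right _ _)
      linarith
    have h2 : ‖x‖ ≤ ∑ e, |x e| := by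
      apply pi_norm_le_iff_of_nonneg (Finset.sum_nonneg fun e _ => abs_nonneg _) |>.mpr
      intro i
      rw [Real.norm_eq_abs]
      exact Finset.single_le_sum (fun e _ => abs_nonneg (x e)) (Finset.mem_univ i)
    calc μ * ‖x‖ ≤ μ * ∑ e, |x e| := mul_le_mul_of_nonneg_left h2 hμpos.le
    _ = ∑ e, μ * |x e| := Finset.mul_sum _ _ _
    _ ≤ f x := h1
  -- primal attainment
  have hA_cont : Continuous fun x : Fin m → ℝ => A *ᵥ x := A.mulVecLin.continuous_of_finiteDimensional
  obtain ⟨xs, hxs_mem, hxs_min⟩ : ∃ xs, (A *ᵥ xs = b ∧ f xs ≤ f x0) ∧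
      ∀ x, (A *ᵥ x = b ∧ f x ≤ f x0) → f xs ≤ f x := by
    have hScl : IsClosed {x : Fin m → ℝ | A *ᵥ x = b ∧ f x ≤ f x0} :=
      ((isClosed_singleton.preimage hA_cont).inter (isClosed_le hf_cont continuous_const))
    have hSbd : Bornology.IsBounded {x : Fin m → ℝ | A *ᵥ x = b ∧ f x ≤ f x0} := by
      apply isBounded_iff_forall_norm_le.mpr
      exact ⟨f x0 / μ, fun x hx => (le_div_iff₀' hμpos).mpr (le_trans (hf_lb x) hx.2)⟩
    have hScp : IsCompact {x : Fin m → ℝ | A *ᵥ x = b ∧ f x ≤ f x0} :=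
      Metric.isCompact_of_isClosed_isBounded hScl hSbd
    obtain ⟨xs, hxsS, hmin⟩ := hScp.exists_isMinOn ⟨x0, ⟨hx0, le_refl _⟩⟩ hf_cont.continuousOn
    exact ⟨xs, hxsS, fun x hx => hmin hx⟩
  set v : ℝ := f xs with hvdef
  have hmin_all : ∀ x, A *ᵥ x = b → v ≤ f x := by
    intro x hx
    rcases le_total (f x) (f x0) with h | h
    · exact hxs_min x ⟨hx, h⟩
    · exact le_trans (hxs_min x0 ⟨hx0, le_refl _⟩) h
  -- weak duality
  have hweak : ∀ y : Fin n → ℝ, (∀ e, -(wm e) ≤ (Aᵀ *ᵥ y) e ∧ (Aᵀ *ᵥ y) e ≤ wp e) →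
      ∀ x : Fin m → ℝ, A *ᵥ x = b → b ⬝ᵥ y ≤ f x := by
    intro y hy x hx
    rw [← hx, hdot]
    rw [hfdef]
    simp only [dotProduct]
    apply Finset.sum_le_sum
    intro e _
    obtain ⟨h1, h2⟩ := hy e
    rcases le_total 0 (x e) with h | h
    · rw [max_eq_left h, max_eq_right (neg_nonpos.mpr h)]
      nlinarith
    · rw [max_eq_right h, max_eq_left (neg_nonneg.mpr h)]
      nlinarith
  -- the epigraph cone
  set K : Set ((Fin n → ℝ) × ℝ) := {p | ∃ x : Fin m → ℝ, A *ᵥ x = p.1 ∧ f x ≤ p.2} with hKdef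
  have hK_conv : Convex ℝ K := by
    rintro p ⟨x1, hp1, hp2⟩ q ⟨x2, hq1, hq2⟩ a c ha hc hac
    refine ⟨a • x1 + c • x2, ?_, ?_⟩
    · simp only [Matrix.mulVec_add, Matrix.mulVec_smul, hp1, hq1, Prod.fst_add, Prod.smul_fst]
    · calc f (a • x1 + c • x2) ≤ f (a • x1) + f (c • x2) := hf_add _ _
      _ = a * f x1 + c * f x2 := by rw [hf_smul a ha, hf_smul c hc]
      _ ≤ a * p.2 + c * q.2 := by
          apply add_le_add <;> apply mul_le_mul_of_nonneg_left <;> assumption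
      _ = (a • p + c • q).2 := by simp [Prod.snd_add, Prod.smul_snd, smul_eq_mul]
  have hK_closed : IsClosed K := by
    apply IsSeqClosed.isClosed
    intro pk p hpk hlim
    choose xk hxk1 hxk2 using hpk
    have hlim1 : Filter.Tendsto (fun k => (pk k).1) Filter.atTop (nhds p.1) :=
      (continuous_fst.tendsto p).comp hlim
    have hlim2 : Filter.Tendsto (fun k => (pk k).2) Filter.atTop (nhds p.2) :=
      (continuous_snd.tendsto p).comp hlim
    obtain ⟨T, hT⟩ := hlim2.bddAbove_range
    have hbd : ∀ k, xk k ∈ Metric.closedBall (0 : Fin m → ℝ) (T / μ) := by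
      intro k
      rw [Metric.mem_closedBall, dist_zero_right]
      have h1 : f (xk k) ≤ T := le_trans (hxk2 k) (hT ⟨k, rfl⟩)
      exact (le_div_iff₀' hμpos).mpr (le_trans (hf_lb _) h1)
    obtain ⟨a, -, φ, hφmono, hφlim⟩ :=
      tendsto_subseq_of_bounded Metric.isBounded_closedBall hbd
    refine ⟨a, ?_, ?_⟩
    · have h1 : Filter.Tendsto (fun k => A *ᵥ xk (φ k)) Filter.atTop (nhds (A *ᵥ a)) :=
        (hA_cont.tendsto a).comp hφlim
      have h2 : Filter.Tendsto (fun k => A *ᵥ xk (φ k)) Filter.atTop (nhds p.1) := by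
        simp only [hxk1]
        exact hlim1.comp hφmono.tendsto_atTop
      exact tendsto_nhds_unique h1 h2
    · exact le_of_tendsto_of_tendsto' ((hf_cont.tendsto a).comp hφlim)
        (hlim2.comp hφmono.tendsto_atTop) (fun k => hxk2 (φ k))
  -- separation
  have hsep : ∀ ε : ℝ, 0 < ε → ∃ y : Fin n → ℝ,
      (∀ e, -(wm e) ≤ (Aᵀ *ᵥ y) e ∧ (Aᵀ *ᵥ y) e ≤ wp e) ∧ v - ε < b ⬝ᵥ y := by
    intro ε hε
    have hbK : ((b, v - ε) : (Fin n → ℝ) × ℝ) ∉ K := by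
      rintro ⟨x, hx1, hx2⟩
      have h := hmin_all x hx1
      simp only at hx2
      linarith
    obtain ⟨g, u, hgu, hug⟩ := geometric_hahn_banach_closed_point hK_conv hK_closed hbK
    have hu : 0 < u := by
      have h0 : ((0, 0) : (Fin n → ℝ) × ℝ) ∈ K :=
        ⟨0, by simp [Matrix.mulVec_zero], by simp [hfdef]⟩
      have := hgu _ h0
      rwa [show ((0, 0) : (Fin n → ℝ) × ℝ) = 0 from rfl, map_zero] at this
    have hKle : ∀ p ∈ K, g p ≤ 0 := by
      intro p hp
      by_contra hgp
      push_neg at hgp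
      obtain ⟨x, h1, h2⟩ := hp
      have hs : (0:ℝ) < (u + 1) / g p := by positivity
      have hmem : ((u + 1) / g p) • p ∈ K := by
        refine ⟨((u + 1) / g p) • x, ?_, ?_⟩
        · simp only [Matrix.mulVec_smul, h1, Prod.smul_fst]
        · rw [hf_smul _ hs.le, Prod.smul_snd, smul_eq_mul]
          exact mul_le_mul_of_nonneg_left h2 hs.le
      have h3 := hgu _ hmem
      rw [g.map_smul, smul_eq_mul, div_mul_cancel₀ _ (ne_of_gt hgp)] at h3
      linarith
    set st : ℝ := g (0, 1) with hstdef
    set y : Fin n → ℝ := fun i => g (Pi.single i 1, 0) with hydef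
    have hdecomp : ∀ p : (Fin n → ℝ) × ℝ, g p = p.1 ⬝ᵥ y + p.2 * st := by
      intro p
      have hp : p = (∑ i, p.1 i • ((Pi.single i (1:ℝ) : Fin n → ℝ), (0:ℝ)))
          + p.2 • ((0 : Fin n → ℝ), (1:ℝ)) := by
        apply Prod.ext
        · simp only [Prod.fst_add, Prod.smul_fst, Prod.fst_sum, Prod.smul_snd,
            smul_zero, smul_eq_mul, mul_one, add_zero]
          funext j
          simp [Finset.sum_apply, Pi.single_apply, mul_ite]
        · simp [Prod.snd_add, Prod.snd_sum]
      nth_rewrite 1 [hp]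
      rw [map_add, map_sum, g.map_smul]
      simp only [g.map_smul, smul_eq_mul]
      rw [dotProduct]
    have hxK : ∀ x : Fin m → ℝ, (A *ᵥ x) ⬝ᵥ y + f x * st ≤ 0 := by
      intro x
      have := hKle (A *ᵥ x, f x) ⟨x, rfl, le_refl _⟩
      rwa [hdecomp] at this
    have hbvK : b ⬝ᵥ y + v * st ≤ 0 := by
      have := hKle (b, v) ⟨xs, hxs_mem.1, le_refl _⟩
      rwa [hdecomp] at this
    have hbe : 0 < b ⬝ᵥ y + (v - ε) * st := by
      have := hdecomp (b, v - ε)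
      simp only at this
      rw [this] at hug
      linarith
    have hst : st < 0 := by nlinarith
    set yh : Fin n → ℝ := (-st)⁻¹ • y with hyhdef
    have hstpos : 0 < -st := by linarith
    have hsingle : ∀ (e : Fin m) (r : ℝ), (A *ᵥ Pi.single e r) ⬝ᵥ y = r * (Aᵀ *ᵥ y) e := by
      intro e r
      rw [hdot]
      simp [dotProduct, Pi.single_apply, mul_ite]
    have hfsingle : ∀ e : Fin m, f (Pi.single e 1) = wp e := by
      intro e
      rw [hfdef]
      simp only
      rw [Finset.sum_eq_single e]
      · simp [Pi.single_apply]
      · intro e' _ hne; simp [Pi.single_apply, Ne.symm hne]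
      · intro h; exact absurd (Finset.mem_univ e) h
    have hfsingle' : ∀ e : Fin m, f (Pi.single e (-1)) = wm e := by
      intro e
      rw [hfdef]
      simp only
      rw [Finset.sum_eq_single e]
      · simp [Pi.single_apply]
      · intro e' _ hne; simp [Pi.single_apply, Ne.symm hne]
      · intro h; exact absurd (Finset.mem_univ e) h
    have hAy : Aᵀ *ᵥ yh = (-st)⁻¹ • (Aᵀ *ᵥ y) := by rw [hyhdef, Matrix.mulVec_smul]
    refine ⟨yh, fun e => ⟨?_, ?_⟩, ?_⟩
    · have h1 := hxK (Pi.single e (-1))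
      rw [hsingle, hfsingle'] at h1
      rw [hAy]
      simp only [Pi.smul_apply, smul_eq_mul]
      rw [inv_mul_eq_div, le_div_iff₀ hstpos]
      nlinarith
    · have h1 := hxK (Pi.single e 1)
      rw [hsingle, hfsingle] at h1
      rw [hAy]
      simp only [Pi.smul_apply, smul_eq_mul]
      rw [inv_mul_eq_div, div_le_iff₀ hstpos]
      nlinarith
    · have h1 : b ⬝ᵥ yh = (-st)⁻¹ * (b ⬝ᵥ y) := by
        rw [hyhdef]
        simp only [dotProduct, Pi.smul_apply, smul_eq_mul, Finset.mul_sum]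
        exact Finset.sum_congr rfl fun i _ => by ring
      rw [h1, inv_mul_eq_div, lt_div_iff₀ hstpos]
      nlinarith
  -- dual attainment
  set F : Set (Fin n → ℝ) := {y | ∀ e, -(wm e) ≤ (Aᵀ *ᵥ y) e ∧ (Aᵀ *ᵥ y) e ≤ wp e} with hFdef
  set V : Submodule ℝ (Fin n → ℝ) := LinearMap.range A.mulVecLin with hVdef
  have hproj : ∀ y ∈ F, ∃ y', (y' ∈ F ∧ y' ∈ V) ∧ b ⬝ᵥ y' = b ⬝ᵥ y := by
    intro y hy
    have h1 : Aᵀ *ᵥ y ∈ LinearMap.range (Aᵀ * A).mulVecLin := by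
      rw [range_AtA_eq' A]
      exact ⟨y, rfl⟩
    obtain ⟨x, hx⟩ := h1
    rw [Matrix.mulVecLin_apply] at hx
    have hAy : Aᵀ *ᵥ (A *ᵥ x) = Aᵀ *ᵥ y := by rw [Matrix.mulVec_mulVec, hx]
    refine ⟨A *ᵥ x, ⟨?_, ⟨x, rfl⟩⟩, ?_⟩
    · intro e; rw [hAy]; exact hy e
    · calc b ⬝ᵥ (A *ᵥ x) = (A *ᵥ x0) ⬝ᵥ (A *ᵥ x) := by rw [hx0]
      _ = x0 ⬝ᵥ (Aᵀ *ᵥ (A *ᵥ x)) := hdot _ _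
      _ = x0 ⬝ᵥ (Aᵀ *ᵥ y) := by rw [hAy]
      _ = (A *ᵥ x0) ⬝ᵥ y := (hdot _ _).symm
      _ = b ⬝ᵥ y := by rw [hx0]
  have hT_cont : Continuous fun y : Fin n → ℝ => Aᵀ *ᵥ y :=
    Aᵀ.mulVecLin.continuous_of_finiteDimensional
  have hF_closed : IsClosed F := by
    rw [hFdef]
    have : {y : Fin n → ℝ | ∀ e, -(wm e) ≤ (Aᵀ *ᵥ y) e ∧ (Aᵀ *ᵥ y) e ≤ wp e} =
        ⋂ e, ({y | -(wm e) ≤ (Aᵀ *ᵥ y) e} ∩ {y | (Aᵀ *ᵥ y) e ≤ wp e}) := by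
      ext y; simp [Set.mem_iInter, forall_and]
    rw [this]
    apply isClosed_iInter
    intro e
    exact (isClosed_le continuous_const ((continuous_apply e).comp hT_cont)).inter
      (isClosed_le ((continuous_apply e).comp hT_cont) continuous_const)
  have hFV_closed : IsClosed (F ∩ (V : Set (Fin n → ℝ))) :=
    hF_closed.inter (Submodule.closed_of_finiteDimensional V)
  -- antilipschitz bound on V
  obtain ⟨C, hC0, hCT⟩ :
      ∃ C : NNReal, 0 < C ∧ AntilipschitzWith C (Aᵀ.mulVecLin.comp V.subtype) := by
    apply LinearMap.exists_antilipschitzWith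
    rw [LinearMap.ker_eq_bot']
    rintro ⟨yy, hyy⟩ hT0
    obtain ⟨x, hx⟩ := hyy
    rw [Matrix.mulVecLin_apply] at hx
    have h0 : Aᵀ *ᵥ yy = 0 := by
      simpa only [LinearMap.comp_apply, Submodule.subtype_apply, Matrix.mulVecLin_apply] using hT0
    have h1 : yy ⬝ᵥ yy = 0 := by
      rw [← hx, hdot, hx, h0, dotProduct_zero]
    exact Subtype.ext (dotProduct_self_eq_zero.mp h1)
  -- boundedness of F ∩ V
  set M : ℝ := Finset.univ.sup' Finset.univ_nonempty wp with hMdef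
  have hMle : ∀ e, wp e ≤ M := fun e => Finset.le_sup' wp (Finset.mem_univ e)
  have hM0 : 0 ≤ M := le_trans (hwp (Classical.arbitrary _)).le (hMle _)
  have hFV_bdd : Bornology.IsBounded (F ∩ (V : Set (Fin n → ℝ))) := by
    apply isBounded_iff_forall_norm_le.mpr
    refine ⟨(C : ℝ) * M, fun y hy => ?_⟩
    have hzb : ‖Aᵀ *ᵥ y‖ ≤ M := by
      apply pi_norm_le_iff_of_nonneg hM0 |>.mpr
      intro e
      rw [Real.norm_eq_abs, abs_le]
      obtain ⟨h1, h2⟩ := hy.1 e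
      exact ⟨by have := hMle e; have := (hw e).2; linarith, le_trans h2 (hMle e)⟩
    have hdist := hCT.le_mul_dist (⟨y, hy.2⟩ : V) 0
    rw [map_zero, dist_zero_right, dist_zero_right] at hdist
    have hnorm1 : ‖(⟨y, hy.2⟩ : V)‖ = ‖y‖ := rfl
    have hnorm2 : ‖(Aᵀ.mulVecLin.comp V.subtype) (⟨y, hy.2⟩ : V)‖ = ‖Aᵀ *ᵥ y‖ := rfl
    rw [hnorm1, hnorm2] at hdist
    calc ‖y‖ ≤ (C : ℝ) * ‖Aᵀ *ᵥ y‖ := hdist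
    _ ≤ (C : ℝ) * M := mul_le_mul_of_nonneg_left hzb C.coe_nonneg
  have hFV_cpt : IsCompact (F ∩ (V : Set (Fin n → ℝ))) :=
    Metric.isCompact_of_isClosed_isBounded hFV_closed hFV_bdd
  have hFV_ne : (F ∩ (V : Set (Fin n → ℝ))).Nonempty := by
    refine ⟨0, fun e => ?_, Submodule.zero_mem V⟩
    rw [Matrix.mulVec_zero]
    exact ⟨by simpa using (hwm e).le, by simpa using (hwp e).le⟩
  have hb_cont : Continuous fun y : Fin n → ℝ => b ⬝ᵥ y := by
    show Continuous fun y : Fin n → ℝ => ∑ i, b i * y i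
    exact continuous_finset_sum _ fun i _ => continuous_const.mul (continuous_apply i)
  obtain ⟨ys, hysFV, hysmax⟩ := hFV_cpt.exists_isMaxOn hFV_ne hb_cont.continuousOn
  have hbys : b ⬝ᵥ ys = v := by
    apply le_antisymm
    · exact hweak ys hysFV.1 xs hxs_mem.1
    · by_contra h
      push_neg at h
      obtain ⟨y, hyF, hyv⟩ := hsep (v - b ⬝ᵥ ys) (by linarith)
      obtain ⟨y', hy'FV, hy'val⟩ := hproj y hyF
      have := hysmax hy'FV
      simp only [Set.mem_setOf_eq] at this
      rw [hy'val] at this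
      linarith
  refine ⟨v, ⟨⟨xs, hxs_mem.1, ?_⟩, ?_⟩, ⟨⟨ys, (hqnorm ys).mpr hysFV.1, hbys⟩, ?_⟩⟩
  · rw [hpnorm]
  · rintro c ⟨x, hxb, hc⟩
    rw [hpnorm] at hc
    rw [← hc]
    exact hmin_all x hxb
  · rintro c ⟨y, hq, hcy⟩
    rw [← hcy]
    exact hweak y ((hqnorm y).mp hq) xs hxs_mem.1
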